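/- In a matrix M with strictly increasing rows, two valid partial contours associated with values x ≤ y satisfy: the partial contour of x lies weakly to the left of the partial contour of y in every common row, and consequently the set of cells strictly between them (excluding the partial contour of x, including the partial contour of y) is exactly the set of positions (i,j) with x ≤ M(i,j) < y. -/
import Mathlib


/-- Partial contours of values `x ≤ y` in a matrix with strictly increasing rows and
columns: the partial contour of `x` lies weakly to the left of that of `y` in every
common row (where the partial contour of `v` consists, for each row `i`, of the cell
`(i, b)` with `b` the largest column such that `M i b' < v` for all `b' ≤ b`), and the
cells between them (excluding the contour of `x`, including that of `y`) are exactly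
the positions `(i, j)` with `x ≤ M i j < y`. -/
theorem partial_contours_between (g : ℕ) (M : Fin g → Fin g → ℝ)
    (hrow : ∀ i, StrictMono (M i)) (hcol : ∀ j, StrictMono (fun i => M i j))
    (x y : ℝ) (hxy : x ≤ y) :
    (∀ (i bx by' : Fin g),
        (M i bx < x ∧ ∀ b', bx < b' → x ≤ M i b') →
        (M i by' < y ∧ ∀ b', by' < b' → y ≤ M i b') →
        bx ≤ by') ∧
    (∀ (i j : Fin g),
        (x ≤ M i j ∧ M i j < y) ↔
          ((∀ bx : Fin g, (M i bx < x ∧ ∀ b', bx < b' → x ≤ M i b') → bx < j) ∧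
           (∃ by' : Fin g, (M i by' < y ∧ ∀ b', by' < b' → y ≤ M i b') ∧ j ≤ by'))) := by
  constructor
  · rintro i bx by' ⟨hbx, -⟩ ⟨-, hby⟩
    by_contra h
    push_neg at h
    exact absurd (hby bx h) (not_le.mpr (lt_of_lt_of_le hbx hxy))
  · intro i j
    constructor
    · rintro ⟨hxM, hMy⟩
      refine ⟨fun bx ⟨h1, _⟩ => (hrow i).lt_iff_lt.mp (lt_of_lt_of_le h1 hxM), ?_⟩
      have hSne : (Finset.univ.filter (fun b => M i b < y)).Nonempty :=
        ⟨j, by simp [hMy]⟩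
      set by' := (Finset.univ.filter (fun b => M i b < y)).max' hSne with hdef
      have hmem := (Finset.univ.filter (fun b => M i b < y)).max'_mem hSne
      simp only [Finset.mem_filter] at hmem
      refine ⟨by', ⟨hmem.2, fun b' hb' => ?_⟩, Finset.le_max' _ j (by simp [hMy])⟩
      by_contra hc
      push_neg at hc
      exact absurd (Finset.le_max' _ b' (by simp [hc])) (not_le.mpr hb')
    · rintro ⟨hall, by', ⟨hby1, -⟩, hjby⟩
      have hMy : M i j < y := lt_of_le_of_lt ((hrow i).monotone hjby) hby1
      refine ⟨?_, hMy⟩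
      by_contra hc
      push_neg at hc
      have hSne : (Finset.univ.filter (fun b => M i b < x)).Nonempty :=
        ⟨j, by simp [hc]⟩
      set bx := (Finset.univ.filter (fun b => M i b < x)).max' hSne with hdef
      have hmem := (Finset.univ.filter (fun b => M i b < x)).max'_mem hSne
      simp only [Finset.mem_filter] at hmem
      have hlt : bx < j := hall bx ⟨hmem.2, fun b' hb' => by
        by_contra hc2
        push_neg at hc2
        exact absurd (Finset.le_max' _ b' (by simp [hc2])) (not_le.mpr hb')⟩
      exact absurd (Finset.le_max' _ j (by simp [hc])) (not_le.mpr hlt)
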